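/- Let f : ℝ^d → T be a measurable function into a countable set T of transcriptions (with the discrete σ-algebra), let s ∈ T, let WER : T × T → ℝ be an arbitrary function, and let k ∈ ℝ. Fix x ∈ ℝ^d and p ∈ (1/2, 1), and suppose μ_x{z ∈ ℝ^d : WER(f(z), s) < k} ≥ p. Then for every δ ∈ ℝ^d with ‖δ‖₂ < R, where R = (σ/2)·(Φ⁻¹(p) − Φ⁻¹(1−p)), one has μ_{x+δ}{z ∈ ℝ^d : WER(f(z), s) < k} > 1/2. -/

import Mathlib

open MeasureTheory ProbabilityTheory
open scoped RealInnerProductSpace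

/-- `Phi` : cumulative distribution function of the standard real Gaussian N(0,1). -/
noncomputable def Phi : ℝ → ℝ := fun t => ((gaussianReal 0 1) (Set.Iic t)).toReal

/-- `PhiInv` : the standard Gaussian quantile function, inverse of `Phi` on (0,1). -/
noncomputable def PhiInv : ℝ → ℝ := Function.invFun Phi

section PhiFacts

open Set Filter
open scoped NNReal ENNReal Topology

lemma gaussianReal_singleton (m a : ℝ) {v : ℝ≥0} (hv : v ≠ 0) :
    gaussianReal m v {a} = 0 :=
  gaussianReal_absolutelyContinuous m hv (measure_singleton a)

lemma gaussianReal_Iio' (m a : ℝ) {v : ℝ≥0} (hv : v ≠ 0) :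
    gaussianReal m v (Set.Iio a) = gaussianReal m v (Set.Iic a) := by
  rw [← Iio_union_right, measure_union (by simp) (measurableSet_singleton a),
    gaussianReal_singleton m a hv, add_zero]

lemma Phi_eq_ofReal (t : ℝ) : (gaussianReal 0 1 (Set.Iic t)) = ENNReal.ofReal (Phi t) := by
  rw [Phi, ENNReal.ofReal_toReal (measure_ne_top _ _)]

lemma Phi_nonneg (t : ℝ) : 0 ≤ Phi t := ENNReal.toReal_nonneg

lemma Phi_le_one (t : ℝ) : Phi t ≤ 1 := by
  rw [Phi]
  have := measure_mono (μ := gaussianReal 0 1) (subset_univ (Set.Iic t))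
  rw [measure_univ] at this
  simpa using ENNReal.toReal_mono (by simp) this

lemma Iic_add_Ioc {a b : ℝ} (hab : a ≤ b) :
    (gaussianReal 0 1) (Set.Iic a) + (gaussianReal 0 1) (Set.Ioc a b)
      = (gaussianReal 0 1) (Set.Iic b) := by
  rw [← measure_union (Iic_disjoint_Ioc le_rfl) measurableSet_Ioc, Set.Iic_union_Ioc_eq_Iic hab]

lemma Phi_strictMono : StrictMono Phi := by
  intro a b hab
  have h1 := Iic_add_Ioc hab.le
  have h2 : (gaussianReal 0 1) (Set.Ioc a b) ≠ 0 := by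
    intro h
    have hvol := gaussianReal_absolutelyContinuous' 0 (one_ne_zero) h
    rw [Real.volume_Ioc] at hvol
    simp only [ENNReal.ofReal_eq_zero] at hvol
    linarith
  have hfin : (gaussianReal 0 1) (Set.Ioc a b) ≠ ⊤ := measure_ne_top _ _
  have : 0 < ((gaussianReal 0 1) (Set.Ioc a b)).toReal := ENNReal.toReal_pos h2 hfin
  rw [Phi, Phi, ← h1, ENNReal.toReal_add (measure_ne_top _ _) hfin]
  simpa using this

lemma Phi_injective : Function.Injective Phi := Phi_strictMono.injective

lemma gaussianPDF_le_one (x : ℝ) : gaussianPDF 0 1 x ≤ 1 := by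
  rw [gaussianPDF]
  refine ENNReal.ofReal_le_one.2 ?_
  rw [gaussianPDFReal]
  have h1 : Real.exp (-(x - 0) ^ 2 / (2 * ((1:ℝ≥0):ℝ))) ≤ 1 := by
    rw [Real.exp_le_one_iff]
    have : (0:ℝ) ≤ (x - 0)^2 := sq_nonneg _
    have h2 : (0:ℝ) < 2 * ((1:ℝ≥0):ℝ) := by norm_num
    apply div_nonpos_of_nonpos_of_nonneg <;> [linarith; linarith]
  have h2 : (1:ℝ) ≤ Real.sqrt (2 * Real.pi * ((1:ℝ≥0):ℝ)) := by
    rw [show ((1:ℝ≥0):ℝ) = 1 by norm_num, mul_one]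
    refine Real.le_sqrt' (by norm_num) |>.2 ?_
    have := Real.pi_gt_three
    norm_num
    linarith
  calc (Real.sqrt (2 * Real.pi * ((1:ℝ≥0):ℝ)))⁻¹ * Real.exp (-(x - 0) ^ 2 / (2 * ((1:ℝ≥0):ℝ)))
      ≤ 1 * 1 := by
        apply mul_le_mul _ h1 (Real.exp_nonneg _) (by norm_num)
        have h0 : (0:ℝ) < Real.sqrt (2 * Real.pi * ((1:ℝ≥0):ℝ)) := by linarith
        rw [inv_le_one_iff₀]
        right; exact h2
    _ = 1 := by norm_num

lemma Phi_sub_le {a b : ℝ} (hab : a ≤ b) : Phi b - Phi a ≤ b - a := by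
  have h1 := Iic_add_Ioc hab
  have hioc : (gaussianReal 0 1) (Set.Ioc a b) ≤ ENNReal.ofReal (b - a) := by
    rw [gaussianReal_apply 0 one_ne_zero]
    calc ∫⁻ x in Set.Ioc a b, gaussianPDF 0 1 x ∂volume
        ≤ ∫⁻ _ in Set.Ioc a b, 1 ∂volume :=
          setLIntegral_mono measurable_const (fun x _ => gaussianPDF_le_one x)
      _ = volume (Set.Ioc a b) := by simp
      _ = ENNReal.ofReal (b - a) := Real.volume_Ioc
  have : Phi b = Phi a + ((gaussianReal 0 1) (Set.Ioc a b)).toReal := by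
    rw [Phi, Phi, ← h1, ENNReal.toReal_add (measure_ne_top _ _) (measure_ne_top _ _)]
  rw [this]
  have := ENNReal.toReal_mono (by simp) hioc
  rw [ENNReal.toReal_ofReal (by linarith)] at this
  linarith

lemma Phi_mono : Monotone Phi := Phi_strictMono.monotone

lemma Phi_continuous : Continuous Phi := by
  rw [Metric.continuous_iff]
  intro t ε hε
  refine ⟨ε, hε, fun a ha => ?_⟩
  rw [Real.dist_eq] at ha ⊢
  rcases le_total a t with h | h
  · have h1 := Phi_sub_le h
    have h2 := Phi_mono h
    rw [abs_sub_comm, abs_of_nonneg (by linarith)]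
    rw [abs_sub_comm, abs_of_nonneg (by linarith)] at ha
    linarith
  · have h1 := Phi_sub_le h
    have h2 := Phi_mono h
    rw [abs_of_nonneg (by linarith)]
    rw [abs_of_nonneg (by linarith)] at ha
    linarith

lemma map_neg_std : (gaussianReal 0 1).map (fun x : ℝ => -x) = gaussianReal 0 1 := by
  have := gaussianReal_map_const_mul (μ := 0) (v := 1) (-1 : ℝ)
  simp only [neg_one_mul] at this
  rw [this]; norm_num

lemma Phi_neg (t : ℝ) : Phi (-t) = 1 - Phi t := by
  have hIci : ((gaussianReal 0 1) (Set.Ici (-t))) = (gaussianReal 0 1) (Set.Iic t) := by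
    conv_lhs => rw [← map_neg_std]
    rw [Measure.map_apply measurable_neg measurableSet_Ici]
    congr 1; ext x; simp
  have hsplit : (gaussianReal 0 1) (Set.Iic (-t)) + (gaussianReal 0 1) (Set.Ioi (-t)) = 1 := by
    rw [← measure_union (Iic_disjoint_Ioi le_rfl) measurableSet_Ioi, Set.Iic_union_Ioi,
      measure_univ]
  have hIoi : (gaussianReal 0 1) (Set.Ioi (-t)) = (gaussianReal 0 1) (Set.Ici (-t)) := by
    rw [← Ioi_union_left, measure_union (by simp) (measurableSet_singleton _),
      gaussianReal_singleton _ _ one_ne_zero, add_zero]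
  rw [Phi, Phi]
  have h1 : (gaussianReal 0 1) (Set.Iic (-t)) = 1 - (gaussianReal 0 1) (Set.Iic t) := by
    rw [← hIci, ← hIoi, eq_comm, ENNReal.sub_eq_of_eq_add (measure_ne_top _ _)]
    rw [eq_comm, add_comm] at hsplit ⊢
    exact hsplit.symm
  rw [h1, ENNReal.toReal_sub_of_le (by exact measure_mono (subset_univ _) |>.trans (by simp)) (by simp)]
  simp

lemma Phi_zero : Phi 0 = 1 / 2 := by
  have := Phi_neg 0
  rw [neg_zero] at this
  linarith

lemma tendsto_Phi_atTop : Tendsto Phi atTop (𝓝 1) := by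
  have h := tendsto_measure_Iic_atTop (μ := gaussianReal 0 1)
  rw [measure_univ] at h
  have : Tendsto (fun t => ((gaussianReal 0 1) (Set.Iic t)).toReal) atTop (𝓝 (1:ℝ≥0∞).toReal) :=
    (ENNReal.continuousAt_toReal (by simp)).tendsto.comp h
  exact this

lemma tendsto_Phi_atBot : Tendsto Phi atBot (𝓝 0) := by
  have h : Tendsto (fun t : ℝ => Phi (-t)) atBot (𝓝 1) :=
    tendsto_Phi_atTop.comp tendsto_neg_atBot_atTop
  have h2 : Tendsto (fun t : ℝ => 1 - Phi (-t)) atBot (𝓝 (1 - 1)) :=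
    tendsto_const_nhds.sub h
  have h3 : (fun t : ℝ => 1 - Phi (-t)) = Phi := by
    ext t; rw [Phi_neg]; ring
  rw [h3] at h2
  simpa using h2

lemma Phi_surj {q : ℝ} (hq0 : 0 < q) (hq1 : q < 1) : ∃ t, Phi t = q := by
  obtain ⟨a, ha⟩ := (tendsto_Phi_atBot.eventually (eventually_lt_nhds hq0)).exists
  obtain ⟨b, hb⟩ := (tendsto_Phi_atTop.eventually (eventually_gt_nhds hq1)).exists
  have hmono := Phi_strictMono.monotone
  have hq : q ∈ Set.Icc (Phi (min a b)) (Phi (max a b)) := by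
    constructor
    · exact le_trans (hmono (min_le_left a b)) ha.le
    · exact le_trans hb.le (hmono (le_max_right a b))
  obtain ⟨t, _, ht⟩ := intermediate_value_Icc (min_le_max) Phi_continuous.continuousOn hq
  exact ⟨t, ht⟩

lemma Phi_PhiInv {q : ℝ} (hq0 : 0 < q) (hq1 : q < 1) : Phi (PhiInv q) = q :=
  Function.invFun_eq (Phi_surj hq0 hq1)

lemma PhiInv_Phi (t : ℝ) : PhiInv (Phi t) = t :=
  Function.leftInverse_invFun Phi_injective t

lemma PhiInv_one_sub {p : ℝ} (hp0 : 0 < p) (hp1 : p < 1) : PhiInv (1 - p) = -(PhiInv p) := by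
  have h : Phi (-(PhiInv p)) = 1 - p := by rw [Phi_neg, Phi_PhiInv hp0 hp1]
  rw [← h, PhiInv_Phi]

lemma PhiInv_pos {p : ℝ} (hp : 1 / 2 < p) (hp1 : p < 1) : 0 < PhiInv p := by
  by_contra h
  push_neg at h
  have := Phi_mono h
  rw [Phi_PhiInv (by linarith) hp1, Phi_zero] at this
  linarith

end PhiFacts

/-- `gaussPi d σ x` : the isotropic Gaussian measure on ℝ^d with mean `x` and covariance σ²I,
i.e. the product measure whose i-th factor is the real Gaussian with mean `x i`, variance σ². -/
noncomputable def gaussPi (d : ℕ) (σ : ℝ) (x : EuclideanSpace ℝ (Fin d)) :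
    Measure (EuclideanSpace ℝ (Fin d)) :=
  Measure.map (MeasurableEquiv.toLp 2 (Fin d → ℝ))
    (Measure.pi fun i => gaussianReal (x i) ⟨σ ^ 2, sq_nonneg σ⟩)

section GaussPiFacts

open Set
open scoped NNReal ENNReal

lemma nnsq_eq (σ : ℝ) : (⟨σ ^ 2, sq_nonneg σ⟩ : ℝ≥0) = NNReal.mk (σ ^ 2) (sq_nonneg σ) := rfl

lemma coe_nnsq (σ : ℝ) : ((NNReal.mk (σ ^ 2) (sq_nonneg σ)) : ℝ) = σ ^ 2 := rfl

instance gaussPi_isProb (d : ℕ) (σ : ℝ) (x : EuclideanSpace ℝ (Fin d)) :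
    IsProbabilityMeasure (gaussPi d σ x) := by
  rw [gaussPi, nnsq_eq σ]
  exact Measure.isProbabilityMeasure_map (MeasurableEquiv.measurable _).aemeasurable

lemma lintegral_fin_prod {n : ℕ} (μ : Fin n → Measure ℝ) [∀ i, SigmaFinite (μ i)]
    (f : Fin n → ℝ → ℝ≥0∞) (hf : ∀ i, Measurable (f i)) :
    ∫⁻ x : Fin n → ℝ, ∏ i, f i (x i) ∂(Measure.pi μ) = ∏ i, ∫⁻ x, f i x ∂(μ i) := by
  induction n with
  | zero =>
      simp only [Finset.univ_eq_empty, Finset.prod_empty, lintegral_const, one_mul]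
      rw [Measure.pi_univ]
      simp
  | succ n ih =>
      have A := (measurePreserving_piFinSuccAbove μ 0).symm
      rw [← A.lintegral_comp_emb (MeasurableEquiv.measurableEmbedding _)]
      simp_rw [MeasurableEquiv.piFinSuccAbove_symm_apply, Fin.insertNthEquiv,
        Fin.prod_univ_succ, Fin.insertNth_zero]
      simp only [Fin.zero_succAbove, cast_eq, Function.comp_def, Fin.cons_zero, Fin.cons_succ,
        Equiv.coe_fn_mk]
      have hm : Measurable fun x : Fin n → ℝ => ∏ i, f i.succ (x i) :=
        Finset.measurable_prod _ fun i _ => (hf i.succ).comp (measurable_pi_apply i)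
      rw [lintegral_prod_mul (hf 0).aemeasurable hm.aemeasurable]
      rw [ih (fun i => μ i.succ) (fun i => f i.succ) (fun i => hf i.succ)]

lemma pi_gauss_eq {d : ℕ} (m : Fin d → ℝ) {v : ℝ≥0} (hv : v ≠ 0) :
    Measure.pi (fun i => gaussianReal (m i) v)
      = (Measure.pi fun _ : Fin d => (volume : Measure ℝ)).withDensity
          (fun z => ∏ i, gaussianPDF (m i) v (z i)) := by
  refine Measure.pi_eq fun s hs => ?_
  have hg : Measurable fun z : Fin d → ℝ => ∏ i, gaussianPDF (m i) v (z i) :=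
    Finset.measurable_prod _ fun i _ => (measurable_gaussianPDF _ _).comp (measurable_pi_apply i)
  rw [withDensity_apply _ (MeasurableSet.univ_pi hs), ← lintegral_indicator (MeasurableSet.univ_pi hs)]
  have hind : (Set.univ.pi s).indicator (fun z : Fin d → ℝ => ∏ i, gaussianPDF (m i) v (z i))
      = fun z => ∏ i, (s i).indicator (gaussianPDF (m i) v) (z i) := by
    ext z
    by_cases hz : z ∈ Set.univ.pi s
    · rw [Set.indicator_of_mem hz]
      refine Finset.prod_congr rfl fun i _ => ?_
      rw [Set.indicator_of_mem (hz i (Set.mem_univ i))]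
    · rw [Set.indicator_of_notMem hz]
      rw [Set.mem_pi] at hz
      push_neg at hz
      obtain ⟨i, _, hi⟩ := hz
      refine (Finset.prod_eq_zero (Finset.mem_univ i) ?_).symm
      rw [Set.indicator_of_notMem hi]
  rw [hind, lintegral_fin_prod _ _ (fun i => (measurable_gaussianPDF _ _).indicator (hs i))]
  refine Finset.prod_congr rfl fun i _ => ?_
  rw [lintegral_indicator (hs i), ← gaussianReal_apply _ hv]

noncomputable def piVol (d : ℕ) : Measure (EuclideanSpace ℝ (Fin d)) :=
  Measure.map (MeasurableEquiv.toLp 2 (Fin d → ℝ)) (Measure.pi fun _ => (volume : Measure ℝ))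

lemma vne {σ : ℝ} (hσ : 0 < σ) : (⟨σ ^ 2, sq_nonneg σ⟩ : ℝ≥0) ≠ 0 := by
  intro h
  have : σ ^ 2 = 0 := congrArg NNReal.toReal h
  nlinarith

lemma gaussPi_eq_withDensity {d : ℕ} {σ : ℝ} (hσ : 0 < σ) (m : EuclideanSpace ℝ (Fin d)) :
    gaussPi d σ m = (piVol d).withDensity
      (fun z : EuclideanSpace ℝ (Fin d) => ∏ i, gaussianPDF (m i) ⟨σ ^ 2, sq_nonneg σ⟩ (z i)) :=
  by
  refine Measure.ext fun s hs => ?_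
  have hg : Measurable fun z : EuclideanSpace ℝ (Fin d) =>
      ∏ i, gaussianPDF (m i) ⟨σ ^ 2, sq_nonneg σ⟩ (z i) :=
    Finset.measurable_prod _ fun i _ => (measurable_gaussianPDF _ _).comp
      ((measurable_pi_apply i).comp (WithLp.measurable_ofLp _ _))
  rw [gaussPi, piVol, MeasurableEquiv.map_apply, withDensity_apply _ hs,
    setLIntegral_map hs hg (MeasurableEquiv.measurable _), pi_gauss_eq (fun i => m i) (vne hσ),
    withDensity_apply _ ((MeasurableEquiv.measurable _) hs)]
  rfl

lemma gaussianPDFReal_shift {σ : ℝ} (hσ : 0 < σ) (m c y : ℝ) :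
    gaussianPDFReal (m + c) ⟨σ ^ 2, sq_nonneg σ⟩ y
      = gaussianPDFReal m ⟨σ ^ 2, sq_nonneg σ⟩ y
        * Real.exp ((c * (y - m) - c ^ 2 / 2) / σ ^ 2) := by
  have hσ2 : (σ:ℝ) ^ 2 ≠ 0 := by positivity
  simp only [gaussianPDFReal, NNReal.coe_mk]
  change (√(2 * Real.pi * σ ^ 2))⁻¹ * Real.exp (-(y - (m + c)) ^ 2 / (2 * σ ^ 2)) =
    (√(2 * Real.pi * σ ^ 2))⁻¹ * Real.exp (-(y - m) ^ 2 / (2 * σ ^ 2)) *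
      Real.exp ((c * (y - m) - c ^ 2 / 2) / σ ^ 2)
  rw [show -(y - (m + c)) ^ 2 / (2 * σ ^ 2)
      = -(y - m) ^ 2 / (2 * σ ^ 2) + (c * (y - m) - c ^ 2 / 2) / σ ^ 2 by field_simp; ring,
    Real.exp_add]
  ring

lemma gaussPi_shift {d : ℕ} {σ : ℝ} (hσ : 0 < σ) (x δ : EuclideanSpace ℝ (Fin d)) :
    gaussPi d σ (x + δ)
      = (gaussPi d σ x).withDensity
          (fun z => ENNReal.ofReal (Real.exp ((⟪δ, z - x⟫ - ‖δ‖ ^ 2 / 2) / σ ^ 2))) := by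
  set v : ℝ≥0 := ⟨σ ^ 2, sq_nonneg σ⟩ with hvdef
  have hsum : ∀ z : EuclideanSpace ℝ (Fin d),
      (∑ i, (δ i * (z i - x i) - δ i ^ 2 / 2) / σ ^ 2)
        = (⟪δ, z - x⟫ - ‖δ‖ ^ 2 / 2) / σ ^ 2 := by
    intro z
    have hinner : ⟪δ, z - x⟫ = ∑ i, δ i * (z i - x i) := by
      rw [PiLp.inner_apply]
      refine Finset.sum_congr rfl fun i _ => ?_
      simp [RCLike.inner_apply]
      ring
    have hnorm : ‖δ‖ ^ 2 = ∑ i, δ i ^ 2 := by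
      rw [← real_inner_self_eq_norm_sq, PiLp.inner_apply]
      refine Finset.sum_congr rfl fun i _ => ?_
      simp [RCLike.inner_apply, sq]
    rw [hinner, hnorm, ← Finset.sum_div]
    congr 1
    rw [Finset.sum_sub_distrib, Finset.sum_div]
  have key : (fun z : EuclideanSpace ℝ (Fin d) => ∏ i, gaussianPDF ((x + δ) i) v (z i))
      = fun z => (∏ i, gaussianPDF (x i) v (z i))
          * ENNReal.ofReal (Real.exp ((⟪δ, z - x⟫ - ‖δ‖ ^ 2 / 2) / σ ^ 2)) := by
    ext z
    have h1 : ∀ i, gaussianPDF ((x + δ) i) v (z i)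
        = gaussianPDF (x i) v (z i)
          * ENNReal.ofReal (Real.exp ((δ i * (z i - x i) - δ i ^ 2 / 2) / σ ^ 2)) := by
      intro i
      have : (x + δ) i = x i + δ i := rfl
      rw [this, gaussianPDF, gaussianPDF, hvdef, gaussianPDFReal_shift hσ,
        ENNReal.ofReal_mul (gaussianPDFReal_nonneg (x i) ⟨σ ^ 2, sq_nonneg σ⟩ (z i))]
    simp_rw [h1]
    rw [Finset.prod_mul_distrib]
    congr 1
    rw [← ENNReal.ofReal_prod_of_nonneg (fun i _ => (Real.exp_nonneg _)), ← Real.exp_sum, hsum]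
  have hmeas1 : Measurable fun z : EuclideanSpace ℝ (Fin d) => ∏ i, gaussianPDF (x i) v (z i) :=
    Finset.measurable_prod _ fun i _ => (measurable_gaussianPDF _ _).comp
      ((measurable_pi_apply i).comp (WithLp.measurable_ofLp _ _))
  have hmeas2 : Measurable fun z : EuclideanSpace ℝ (Fin d) =>
      ENNReal.ofReal (Real.exp ((⟪δ, z - x⟫ - ‖δ‖ ^ 2 / 2) / σ ^ 2)) := by
    refine ENNReal.measurable_ofReal.comp (Real.measurable_exp.comp (Measurable.div_const ?_ _))
    refine Measurable.sub_const ?_ _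
    exact (Continuous.inner continuous_const (continuous_id.sub continuous_const)).measurable
  calc gaussPi d σ (x + δ)
      = (piVol d).withDensity
          (fun z : EuclideanSpace ℝ (Fin d) => ∏ i, gaussianPDF ((x + δ) i) v (z i)) :=
        gaussPi_eq_withDensity hσ _
    _ = (piVol d).withDensity
          ((fun z : EuclideanSpace ℝ (Fin d) => ∏ i, gaussianPDF (x i) v (z i))
            * fun z => ENNReal.ofReal (Real.exp ((⟪δ, z - x⟫ - ‖δ‖ ^ 2 / 2) / σ ^ 2))) := by
        rw [key]; rfl
    _ = _ := by
        rw [withDensity_mul _ hmeas1 hmeas2, ← gaussPi_eq_withDensity hσ x]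

lemma piVol_eq_volume (d : ℕ) : piVol d = (volume : Measure (EuclideanSpace ℝ (Fin d))) := by
  exact (PiLp.volume_preserving_toLp (Fin d)).map_eq

lemma dens_radial {d : ℕ} {σ : ℝ} (hσ : 0 < σ) (z : EuclideanSpace ℝ (Fin d)) :
    (∏ i, gaussianPDF ((0 : EuclideanSpace ℝ (Fin d)) i) ⟨σ ^ 2, sq_nonneg σ⟩ (z i))
      = ENNReal.ofReal ((Real.sqrt (2 * Real.pi * σ ^ 2))⁻¹ ^ d
          * Real.exp (-‖z‖ ^ 2 / (2 * σ ^ 2))) := by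
  have h0 : ∀ i, (0 : EuclideanSpace ℝ (Fin d)) i = 0 := fun _ => rfl
  have hnorm : ‖z‖ ^ 2 = ∑ i, z i ^ 2 := by
    rw [← real_inner_self_eq_norm_sq, PiLp.inner_apply]
    refine Finset.sum_congr rfl fun i _ => ?_
    simp [RCLike.inner_apply, sq]
  simp_rw [gaussianPDF, h0]
  rw [← ENNReal.ofReal_prod_of_nonneg (fun i _ => gaussianPDFReal_nonneg 0 ⟨σ ^ 2, sq_nonneg σ⟩ _)]
  congr 1
  rw [nnsq_eq σ]
  simp_rw [gaussianPDFReal, coe_nnsq]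
  rw [Finset.prod_mul_distrib, Finset.prod_const, ← Real.exp_sum, Finset.card_univ,
    Fintype.card_fin]
  congr 2
  rw [hnorm, neg_div, Finset.sum_div, ← Finset.sum_neg_distrib]
  exact Finset.sum_congr rfl fun i _ => by ring

lemma gaussPi_zero_rot {d : ℕ} {σ : ℝ} (hσ : 0 < σ)
    (O : EuclideanSpace ℝ (Fin d) ≃ₗᵢ[ℝ] EuclideanSpace ℝ (Fin d))
    {B : Set (EuclideanSpace ℝ (Fin d))} (hB : MeasurableSet B) :
    gaussPi d σ 0 (⇑O ⁻¹' B) = gaussPi d σ 0 B := by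
  set ρ := fun z : EuclideanSpace ℝ (Fin d) =>
    ∏ i, gaussianPDF ((0 : EuclideanSpace ℝ (Fin d)) i) ⟨σ ^ 2, sq_nonneg σ⟩ (z i) with hρ
  have hmass : gaussPi d σ 0 = volume.withDensity ρ := by
    rw [gaussPi_eq_withDensity hσ, piVol_eq_volume]
  have hOB : MeasurableSet (⇑O ⁻¹' B) := hB.preimage O.continuous.measurable
  rw [hmass, withDensity_apply _ hOB, withDensity_apply _ hB]
  have hmp : MeasurePreserving (⇑O) (volume : Measure (EuclideanSpace ℝ (Fin d))) volume :=
    O.measurePreserving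
  have hemb : MeasurableEmbedding (⇑O) := O.toHomeomorph.measurableEmbedding
  rw [← hmp.setLIntegral_comp_preimage_emb hemb ρ B]
  refine setLIntegral_congr_fun hOB (fun x _ => ?_)
  rw [hρ]
  simp only
  rw [dens_radial hσ, dens_radial hσ, O.norm_map]

lemma gaussPi_cylinder {d : ℕ} {σ : ℝ} (hσ : 0 < σ) (i₀ : Fin d) (c : ℝ) :
    gaussPi d σ 0 {w : EuclideanSpace ℝ (Fin d) | w i₀ < c}
      = gaussianReal 0 ⟨σ ^ 2, sq_nonneg σ⟩ (Set.Iio c) := by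
  have hset : {w : Fin d → ℝ | w i₀ < c}
      = Set.univ.pi (Function.update (fun _ : Fin d => (Set.univ : Set ℝ)) i₀ (Set.Iio c)) := by
    rw [← Set.eval_preimage]
    rfl
  have key : (Measure.pi fun _ : Fin d => gaussianReal (0:ℝ) ⟨σ ^ 2, sq_nonneg σ⟩)
      {w : Fin d → ℝ | w i₀ < c} = gaussianReal 0 ⟨σ ^ 2, sq_nonneg σ⟩ (Set.Iio c) := by
    rw [nnsq_eq σ]
    rw [hset, Measure.pi_pi]
    have h1 : ∀ b ∈ Finset.univ, b ≠ i₀ → (gaussianReal (0:ℝ) (NNReal.mk (σ ^ 2) (sq_nonneg σ)))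
        (Function.update (fun _ : Fin d => (Set.univ : Set ℝ)) i₀ (Set.Iio c) b) = 1 := by
      intro b _ hb
      rw [Function.update_of_ne hb]
      exact measure_univ
    rw [Finset.prod_eq_single i₀ h1 (by simp), Function.update_self]
  rw [gaussPi, MeasurableEquiv.map_apply]
  exact key

lemma gaussPi_inner_lt {d : ℕ} {σ : ℝ} (hσ : 0 < σ) (m u : EuclideanSpace ℝ (Fin d))
    (hu : ‖u‖ = 1) (c : ℝ) :
    gaussPi d σ m {z : EuclideanSpace ℝ (Fin d) | ⟪u, z⟫ < c}
      = gaussianReal 0 ⟨σ ^ 2, sq_nonneg σ⟩ (Set.Iio (c - ⟪u, m⟫)) := by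
  have hScont : ∀ c' : ℝ, MeasurableSet {z : EuclideanSpace ℝ (Fin d) | ⟪u, z⟫ < c'} := by
    intro c'
    exact measurableSet_lt ((Continuous.inner continuous_const continuous_id).measurable)
      measurable_const
  have step1 : gaussPi d σ m {z : EuclideanSpace ℝ (Fin d) | ⟪u, z⟫ < c}
      = gaussPi d σ 0 {z : EuclideanSpace ℝ (Fin d) | ⟪u, z⟫ < c - ⟪u, m⟫} := by
    have hT : MeasurePreserving (fun w : EuclideanSpace ℝ (Fin d) => w + m) volume volume :=
      measurePreserving_add_right volume m
    have hemb : MeasurableEmbedding (fun w : EuclideanSpace ℝ (Fin d) => w + m) :=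
      (MeasurableEquiv.addRight m).measurableEmbedding
    have hshift : ∀ w : EuclideanSpace ℝ (Fin d),
        (∏ i, gaussianPDF (m i) ⟨σ ^ 2, sq_nonneg σ⟩ ((w + m) i))
          = ∏ i, gaussianPDF ((0 : EuclideanSpace ℝ (Fin d)) i) ⟨σ ^ 2, sq_nonneg σ⟩ (w i) := by
      intro w
      refine Finset.prod_congr rfl fun i _ => ?_
      have h1 : (w + m) i = w i + m i := rfl
      have h2 : (0 : EuclideanSpace ℝ (Fin d)) i = 0 := rfl
      rw [h1, h2, nnsq_eq σ, gaussianPDF, gaussianPDF]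
      congr 1
      unfold gaussianPDFReal
      norm_num
    have hpre : (fun w : EuclideanSpace ℝ (Fin d) => w + m) ⁻¹'
        {z : EuclideanSpace ℝ (Fin d) | ⟪u, z⟫ < c}
        = {z : EuclideanSpace ℝ (Fin d) | ⟪u, z⟫ < c - ⟪u, m⟫} := by
      ext w
      simp only [Set.mem_preimage, Set.mem_setOf_eq, inner_add_right]
      constructor <;> intro <;> linarith
    rw [gaussPi_eq_withDensity hσ, gaussPi_eq_withDensity hσ, piVol_eq_volume,
      withDensity_apply _ (hScont c), withDensity_apply _ (hScont _),
      ← hT.setLIntegral_comp_preimage_emb hemb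
        (fun z : EuclideanSpace ℝ (Fin d) => ∏ i, gaussianPDF (m i) ⟨σ ^ 2, sq_nonneg σ⟩ (z i))
        {z | ⟪u, z⟫ < c}, hpre]
    refine setLIntegral_congr_fun (hScont _) (fun w _ => ?_)
    exact hshift w
  rw [step1]
  have hne : Nonempty (Fin d) := by
    by_contra h
    have hie : IsEmpty (Fin d) := not_nonempty_iff.mp h
    have : u = 0 := PiLp.ext fun i => hie.elim i
    rw [this, norm_zero] at hu
    norm_num at hu
  set i₀ := Classical.arbitrary (Fin d)
  set e₀ : EuclideanSpace ℝ (Fin d) := EuclideanSpace.single i₀ (1 : ℝ) with he₀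
  have he₀norm : ‖e₀‖ = 1 := by rw [he₀, EuclideanSpace.norm_single]; norm_num
  set O := Submodule.reflection (ℝ ∙ (u - e₀))ᗮ with hO
  have hOu : O u = e₀ := Submodule.reflection_sub (by rw [hu, he₀norm])
  have hsetrot : {z : EuclideanSpace ℝ (Fin d) | ⟪u, z⟫ < c - ⟪u, m⟫}
      = ⇑O ⁻¹' {w : EuclideanSpace ℝ (Fin d) | w i₀ < c - ⟪u, m⟫} := by
    ext z
    simp only [Set.mem_preimage, Set.mem_setOf_eq]
    have h1 : ⟪u, z⟫ = ⟪O u, O z⟫ := (O.inner_map_map u z).symm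
    have h2 : ⟪e₀, O z⟫ = (O z) i₀ := by
      rw [he₀, EuclideanSpace.inner_single_left]
      simp
    rw [h1, hOu, h2]
  have hproj : Measurable fun w : EuclideanSpace ℝ (Fin d) => w i₀ :=
    (EuclideanSpace.proj (𝕜 := ℝ) i₀).continuous.measurable
  have hBmeas : MeasurableSet {w : EuclideanSpace ℝ (Fin d) | w i₀ < c - ⟪u, m⟫} :=
    measurableSet_lt hproj measurable_const
  rw [hsetrot, gaussPi_zero_rot hσ O hBmeas]
  exact gaussPi_cylinder hσ i₀ _

lemma gaussianReal_Iio_eq_Phi {σ : ℝ} (hσ : 0 < σ) (t : ℝ) :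
    gaussianReal 0 ⟨σ ^ 2, sq_nonneg σ⟩ (Set.Iio t) = ENNReal.ofReal (Phi (t / σ)) := by
  have hmap := gaussianReal_map_const_mul (μ := (0:ℝ)) (v := 1) σ
  simp only [mul_zero, mul_one] at hmap
  have hv : (⟨σ ^ 2, sq_nonneg σ⟩ : ℝ≥0) = ⟨σ ^ 2, sq_nonneg _⟩ := rfl
  rw [nnsq_eq σ, ← hmap, Measure.map_apply (measurable_const_mul σ) measurableSet_Iio]
  have hpre : (fun x : ℝ => σ * x) ⁻¹' Set.Iio t = Set.Iio (t / σ) := by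
    ext y
    simp only [Set.mem_preimage, Set.mem_Iio]
    rw [lt_div_iff₀ hσ, mul_comm]
  rw [hpre, gaussianReal_Iio' 0 _ one_ne_zero, Phi_eq_ofReal]

end GaussPiFacts

/-- Randomized-smoothing robustness of the Word-Error-Rate for a Gaussian-smoothed ASR model
(main Proposition, Section 6.2): if with probability at least `p > 1/2` (under Gaussian noise
around `x`) the transcription has WER to the sentence `s` below `k`, then the same event keeps
probability `> 1/2` under Gaussian noise around `x + δ` whenever
`‖δ‖₂ < R = (σ/2)(Φ⁻¹(p) - Φ⁻¹(1-p))`. -/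
theorem wer_smoothing_certificate
    {d : ℕ} {σ : ℝ} (hσ : 0 < σ)
    {T : Type*} [Countable T] [MeasurableSpace T] [MeasurableSingletonClass T]
    (f : EuclideanSpace ℝ (Fin d) → T) (hf : Measurable f)
    (s : T) (WER : T × T → ℝ) (k : ℝ)
    (x : EuclideanSpace ℝ (Fin d)) (p : ℝ) (hp : p ∈ Set.Ioo (1 / 2 : ℝ) 1)
    (hpx : p ≤ (gaussPi d σ x {z | WER (f z, s) < k}).toReal) :
    ∀ δ : EuclideanSpace ℝ (Fin d),
      ‖δ‖ < σ / 2 * (PhiInv p - PhiInv (1 - p)) →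
      1 / 2 < (gaussPi d σ (x + δ) {z | WER (f z, s) < k}).toReal := by
  intro δ hδR
  obtain ⟨hp1, hp2⟩ := hp
  have hp0 : 0 < p := by linarith
  by_cases hδ0 : δ = 0
  · subst hδ0
    rw [add_zero]
    linarith
  -- setup
  set E : Set (EuclideanSpace ℝ (Fin d)) := {z | WER (f z, s) < k} with hEdef
  have hE : MeasurableSet E :=
    hf (Set.Countable.measurableSet (Set.to_countable {t : T | WER (t, s) < k}))
  have hR : σ / 2 * (PhiInv p - PhiInv (1 - p)) = σ * PhiInv p := by
    rw [PhiInv_one_sub hp0 hp2]; ring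
  set a : ℝ := σ * PhiInv p with ha
  rw [hR] at hδR
  have hδpos : 0 < ‖δ‖ := norm_pos_iff.2 hδ0
  have hapos : 0 < a := lt_trans hδpos hδR
  set u : EuclideanSpace ℝ (Fin d) := ‖δ‖⁻¹ • δ with hu_def
  have hu : ‖u‖ = 1 := by
    rw [hu_def, norm_smul, norm_inv, norm_norm, inv_mul_cancel₀ hδpos.ne']
  have hδu : δ = ‖δ‖ • u := by
    rw [hu_def, smul_smul, mul_inv_cancel₀ hδpos.ne', one_smul]
  have huδ : ⟪u, δ⟫ = ‖δ‖ := by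
    rw [hu_def, real_inner_smul_left, real_inner_self_eq_norm_sq]
    field_simp
  set A : Set (EuclideanSpace ℝ (Fin d)) := {z | ⟪u, z⟫ < a + ⟪u, x⟫} with hAdef
  have hAmeas : MeasurableSet A :=
    measurableSet_lt ((Continuous.inner continuous_const continuous_id).measurable)
      measurable_const
  set μ := gaussPi d σ x with hμdef
  set ν := gaussPi d σ (x + δ) with hνdef
  -- measure of A under both
  have hmuA : μ A = ENNReal.ofReal p := by
    rw [hμdef, hAdef, gaussPi_inner_lt hσ x u hu]
    rw [show a + ⟪u, x⟫ - ⟪u, x⟫ = a by ring, gaussianReal_Iio_eq_Phi hσ, ha,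
      show σ * PhiInv p / σ = PhiInv p by field_simp, Phi_PhiInv hp0 hp2]
  have hnuA : ν A = ENNReal.ofReal (Phi ((a - ‖δ‖) / σ)) := by
    rw [hνdef, hAdef, gaussPi_inner_lt hσ (x + δ) u hu, inner_add_right, huδ,
      show a + ⟪u, x⟫ - (⟪u, x⟫ + ‖δ‖) = a - ‖δ‖ by ring, gaussianReal_Iio_eq_Phi hσ]
  -- likelihood ratio
  set g : EuclideanSpace ℝ (Fin d) → ℝ := fun z => (⟪δ, z - x⟫ - ‖δ‖ ^ 2 / 2) / σ ^ 2 with hgdef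
  set h : EuclideanSpace ℝ (Fin d) → ENNReal := fun z => ENNReal.ofReal (Real.exp (g z))
    with hhdef
  have hdens : ν = μ.withDensity h := gaussPi_shift hσ x δ
  have hhmeas : Measurable h := by
    refine ENNReal.measurable_ofReal.comp (Real.measurable_exp.comp (Measurable.div_const ?_ _))
    refine Measurable.sub_const ?_ _
    exact (Continuous.inner continuous_const (continuous_id.sub continuous_const)).measurable
  set L : ENNReal := ENNReal.ofReal (Real.exp ((‖δ‖ * a - ‖δ‖ ^ 2 / 2) / σ ^ 2)) with hLdef
  have hAiff : ∀ z : EuclideanSpace ℝ (Fin d), z ∈ A ↔ ⟪δ, z - x⟫ < ‖δ‖ * a := by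
    intro z
    have h1 : ⟪δ, z - x⟫ = ‖δ‖ * ⟪u, z - x⟫ := by
      conv_lhs => rw [hδu]
      rw [real_inner_smul_left]
    rw [hAdef, Set.mem_setOf_eq, h1]
    rw [inner_sub_right]
    constructor
    · intro hlt
      have : ⟪u, z⟫ - ⟪u, x⟫ < a := by linarith
      exact (mul_lt_mul_iff_right₀ hδpos).2 this
    · intro hlt
      have := (mul_lt_mul_iff_right₀ hδpos).1 hlt
      linarith
  have hhleA : ∀ z ∈ A, h z ≤ L := by
    intro z hz
    rw [hhdef, hLdef]
    refine ENNReal.ofReal_le_ofReal (Real.exp_le_exp.2 ?_)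
    rw [hgdef]
    have := (hAiff z).1 hz
    have hσ2 : (0:ℝ) < σ ^ 2 := by positivity
    refine div_le_div_of_nonneg_right ?_ hσ2.le
    linarith
  have hhgeAc : ∀ z ∉ A, L ≤ h z := by
    intro z hz
    rw [hhdef, hLdef]
    refine ENNReal.ofReal_le_ofReal (Real.exp_le_exp.2 ?_)
    rw [hgdef]
    have := (hAiff z).not.1 hz
    push_neg at this
    have hσ2 : (0:ℝ) < σ ^ 2 := by positivity
    refine div_le_div_of_nonneg_right ?_ hσ2.le
    linarith
  -- μ A ≤ μ E
  have hmuAE : μ A ≤ μ E := by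
    rw [hmuA]
    calc ENNReal.ofReal p ≤ ENNReal.ofReal ((μ E).toReal) := ENNReal.ofReal_le_ofReal hpx
      _ = μ E := ENNReal.ofReal_toReal (measure_ne_top _ _)
  have hdiff : μ (A \ E) ≤ μ (E \ A) := by
    have e1 : μ (A ∩ E) + μ (A \ E) = μ A := measure_inter_add_diff A hE
    have e2 : μ (E ∩ A) + μ (E \ A) = μ E := measure_inter_add_diff E hAmeas
    rw [Set.inter_comm E A] at e2
    have : μ (A ∩ E) + μ (A \ E) ≤ μ (A ∩ E) + μ (E \ A) := by
      rw [e1, e2]; exact hmuAE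
    exact (ENNReal.add_le_add_iff_left (measure_ne_top _ _)).1 this
  -- NP chain
  have hbound1 : ν (A \ E) ≤ L * μ (A \ E) := by
    rw [hdens, withDensity_apply _ (hAmeas.diff hE)]
    calc ∫⁻ z in A \ E, h z ∂μ ≤ ∫⁻ _ in A \ E, L ∂μ :=
          setLIntegral_mono measurable_const (fun z hz => hhleA z hz.1)
      _ = L * μ (A \ E) := setLIntegral_const _ _
  have hbound2 : L * μ (E \ A) ≤ ν (E \ A) := by
    rw [hdens, withDensity_apply _ (hE.diff hAmeas)]
    calc L * μ (E \ A) = ∫⁻ _ in E \ A, L ∂μ := (setLIntegral_const _ _).symm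
      _ ≤ ∫⁻ z in E \ A, h z ∂μ := setLIntegral_mono hhmeas (fun z hz => hhgeAc z hz.2)
  have hchain : ν A ≤ ν E := by
    calc ν A = ν (A ∩ E) + ν (A \ E) := (measure_inter_add_diff A hE).symm
      _ ≤ ν (A ∩ E) + L * μ (A \ E) := add_le_add le_rfl hbound1
      _ ≤ ν (A ∩ E) + L * μ (E \ A) := add_le_add le_rfl (mul_le_mul_right hdiff L)
      _ ≤ ν (A ∩ E) + ν (E \ A) := add_le_add le_rfl hbound2
      _ = ν (E ∩ A) + ν (E \ A) := by rw [Set.inter_comm]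
      _ = ν E := measure_inter_add_diff E hAmeas
  -- conclusion
  have hfinal : ENNReal.ofReal (Phi ((a - ‖δ‖) / σ)) ≤ ν E := by
    rw [← hnuA]; exact hchain
  have htr := ENNReal.toReal_mono (measure_ne_top _ _) hfinal
  rw [ENNReal.toReal_ofReal (Phi_nonneg _)] at htr
  have hgt : 1 / 2 < Phi ((a - ‖δ‖) / σ) := by
    have h0 : (0:ℝ) < (a - ‖δ‖) / σ := by
      apply div_pos _ hσ
      linarith
    have := Phi_strictMono h0
    rw [Phi_zero] at this
    exact this
  exact lt_of_lt_of_le hgt htr
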